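/- arXiv:2407.18313 — 3 statements merged into one kernel-verified Lean document; each statement's English description precedes it below -/
import Mathlib

section
/- (Smacof minorization lemma.) Let X and Y be configurations such that d_ij(Y) > 0 for every pair i < j with w_ij·δ_ij > 0. Then Σ_{i<j} w_ij δ_ij d_ij(X) ≥ Σ_{i<j, d_ij(Y)>0} w_ij δ_ij ⟨X i − X j, Y i − Y j⟩ / d_ij(Y), with equality when X = Y. -/
open scoped BigOperators

/-- Distance between points `i` and `j` of a configuration. -/
noncomputable def confDist {n p : ℕ} (X : Fin n → EuclideanSpace ℝ (Fin p))
    (i j : Fin n) : ℝ := ‖X i - X j‖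

/-- Sum of `f i j` over all pairs `i < j`. -/
noncomputable def pairSum (n : ℕ) (f : Fin n → Fin n → ℝ) : ℝ :=
  ∑ i : Fin n, ∑ j : Fin n, if i < j then f i j else 0

/-- Smacof minorization lemma: the weighted sum of distances of `X` is minorized by
the Cauchy–Schwarz linearization at `Y`, with equality when `X = Y`. -/
theorem smacof_minorization
    {n p : ℕ} (hn : 2 ≤ n) (hp : 1 ≤ p)
    (w δ : Fin n → Fin n → ℝ)
    (hw : ∀ i j : Fin n, i < j → 0 ≤ w i j)
    (hw1 : pairSum n w = 1)
    (hδ : ∀ i j : Fin n, i < j → 0 ≤ δ i j)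
    (X Y : Fin n → EuclideanSpace ℝ (Fin p))
    (hY : ∀ i j : Fin n, i < j → 0 < w i j * δ i j → 0 < confDist Y i j) :
    pairSum n (fun i j => w i j * δ i j * confDist X i j) ≥
      pairSum n (fun i j =>
        if 0 < confDist Y i j then
          w i j * δ i j * (inner ℝ (X i - X j) (Y i - Y j) : ℝ) / confDist Y i j
        else 0) ∧
    (X = Y →
      pairSum n (fun i j => w i j * δ i j * confDist X i j) =
        pairSum n (fun i j =>
          if 0 < confDist Y i j then
            w i j * δ i j * (inner ℝ (X i - X j) (Y i - Y j) : ℝ) / confDist Y i j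
          else 0)) := by
  constructor
  · unfold pairSum
    apply Finset.sum_le_sum
    intro i _
    apply Finset.sum_le_sum
    intro j _
    by_cases hij : i < j
    · simp only [hij, if_true]
      by_cases hd : 0 < confDist Y i j
      · simp only [hd, if_true]
        rw [div_le_iff₀ hd]
        have hcs : (inner ℝ (X i - X j) (Y i - Y j) : ℝ) ≤ ‖X i - X j‖ * ‖Y i - Y j‖ :=
          real_inner_le_norm _ _
        have hwδ : 0 ≤ w i j * δ i j := mul_nonneg (hw i j hij) (hδ i j hij)
        calc w i j * δ i j * (inner ℝ (X i - X j) (Y i - Y j) : ℝ)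
            ≤ w i j * δ i j * (‖X i - X j‖ * ‖Y i - Y j‖) := by
              exact mul_le_mul_of_nonneg_left hcs hwδ
          _ = w i j * δ i j * confDist X i j * confDist Y i j := by
              unfold confDist; ring
      · simp only [hd, if_false]
        exact mul_nonneg (mul_nonneg (hw i j hij) (hδ i j hij)) (norm_nonneg _)
    · simp [hij]
  · rintro rfl
    unfold pairSum
    apply Finset.sum_congr rfl
    intro i _
    apply Finset.sum_congr rfl
    intro j _
    by_cases hij : i < j
    · simp only [hij, if_true]
      by_cases hd : 0 < confDist X i j
      · simp only [hd, if_true]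
        rw [real_inner_self_eq_norm_mul_norm]
        unfold confDist at hd ⊢
        field_simp
      · simp only [hd, if_false]
        have : confDist X i j = 0 := le_antisymm (not_lt.mp hd) (norm_nonneg _)
        rw [this, mul_zero]
    · simp [hij]
end

section
/- (The quadratic function ξ majorizes ω.) Let Y be a configuration with η₂²(Y) > 0 and d_ij(Y) > 0 for every pair i < j with w_ij > 0. Define ω(X,Y) := σ_R(X) − σ₂(Y)·η₂²(X) and ξ(X,Y) := η²(Δ) + (1 − σ₂(Y))·η₁²(X) − 2·Σ_{i<j} w_ij δ_ij ⟨X i − X j, Y i − Y j⟩/d_ij(Y) + σ₂(Y)·d̄(Y)·Σ_{i<j} w_ij d_ij(X)²/d_ij(Y). Then for every configuration X, ω(X,Y) ≤ ξ(X,Y), and ω(Y,Y) = ξ(Y,Y). -/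
open scoped BigOperators

/-- Raw stress. -/
noncomputable def sigmaR {n p : ℕ} (w δ : Fin n → Fin n → ℝ)
    (X : Fin n → EuclideanSpace ℝ (Fin p)) : ℝ :=
  pairSum n (fun i j => w i j * (δ i j - confDist X i j) ^ 2)

/-- `η₁²`. -/
noncomputable def eta1sq {n p : ℕ} (w : Fin n → Fin n → ℝ)
    (X : Fin n → EuclideanSpace ℝ (Fin p)) : ℝ :=
  pairSum n (fun i j => w i j * confDist X i j ^ 2)

/-- Mean of the distances. -/
noncomputable def dbar {n p : ℕ} (w : Fin n → Fin n → ℝ)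
    (X : Fin n → EuclideanSpace ℝ (Fin p)) : ℝ :=
  pairSum n (fun i j => w i j * confDist X i j)

/-- Variance of the distances, `η₂²`. -/
noncomputable def eta2sq {n p : ℕ} (w : Fin n → Fin n → ℝ)
    (X : Fin n → EuclideanSpace ℝ (Fin p)) : ℝ :=
  pairSum n (fun i j => w i j * (confDist X i j - dbar w X) ^ 2)

/-- `η²(Δ)`. -/
noncomputable def etaDeltaSq (n : ℕ) (w δ : Fin n → Fin n → ℝ) : ℝ :=
  pairSum n (fun i j => w i j * δ i j ^ 2)

/-- Kruskal's stress formula two. -/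
noncomputable def sigma2 {n p : ℕ} (w δ : Fin n → Fin n → ℝ)
    (X : Fin n → EuclideanSpace ℝ (Fin p)) : ℝ :=
  sigmaR w δ X / eta2sq w X

/-- The Dinkelbach difference `ω(X,Y)`. -/
noncomputable def omegaFun {n p : ℕ} (w δ : Fin n → Fin n → ℝ)
    (X Y : Fin n → EuclideanSpace ℝ (Fin p)) : ℝ :=
  sigmaR w δ X - sigma2 w δ Y * eta2sq w X

/-- The quadratic majorizer `ξ(X,Y)`. -/
noncomputable def xiFun {n p : ℕ} (w δ : Fin n → Fin n → ℝ)
    (X Y : Fin n → EuclideanSpace ℝ (Fin p)) : ℝ :=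
  etaDeltaSq n w δ + (1 - sigma2 w δ Y) * eta1sq w X -
    2 * pairSum n (fun i j =>
      w i j * δ i j * (inner ℝ (X i - X j) (Y i - Y j) : ℝ) / confDist Y i j) +
    sigma2 w δ Y * dbar w Y *
      pairSum n (fun i j => w i j * confDist X i j ^ 2 / confDist Y i j)


section XiAux
variable {n : ℕ}

lemma pairSum_eq_prod' (f : Fin n → Fin n → ℝ) :
    pairSum n f = ∑ q : Fin n × Fin n, if q.1 < q.2 then f q.1 q.2 else 0 := by
  rw [pairSum, Fintype.sum_prod_type]

lemma pairSum_add' (f g : Fin n → Fin n → ℝ) :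
    pairSum n (fun i j => f i j + g i j) = pairSum n f + pairSum n g := by
  simp only [pairSum_eq_prod', ← Finset.sum_add_distrib]
  exact Finset.sum_congr rfl fun q _ => by split <;> simp

lemma pairSum_smul' (c : ℝ) (f : Fin n → Fin n → ℝ) :
    pairSum n (fun i j => c * f i j) = c * pairSum n f := by
  simp only [pairSum_eq_prod', Finset.mul_sum]
  exact Finset.sum_congr rfl fun q _ => by split <;> simp

lemma pairSum_congr' {f g : Fin n → Fin n → ℝ} (h : ∀ i j, i < j → f i j = g i j) :
    pairSum n f = pairSum n g := by
  simp only [pairSum_eq_prod']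
  refine Finset.sum_congr rfl fun q _ => ?_
  split
  · exact h _ _ (by assumption)
  · rfl

lemma pairSum_le' {f g : Fin n → Fin n → ℝ} (h : ∀ i j, i < j → f i j ≤ g i j) :
    pairSum n f ≤ pairSum n g := by
  simp only [pairSum_eq_prod']
  refine Finset.sum_le_sum fun q _ => ?_
  split
  · exact h _ _ (by assumption)
  · exact le_rfl

lemma pairSum_nonneg' {f : Fin n → Fin n → ℝ} (h : ∀ i j, i < j → 0 ≤ f i j) :
    0 ≤ pairSum n f := by
  have := pairSum_le' (f := fun _ _ => (0:ℝ)) (g := f) h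
  simpa [pairSum] using this

end XiAux

section XiMain
variable {n p : ℕ}

lemma sigmaR_expand (w δ : Fin n → Fin n → ℝ) (X : Fin n → EuclideanSpace ℝ (Fin p)) :
    sigmaR w δ X = etaDeltaSq n w δ
      - 2 * pairSum n (fun i j => w i j * δ i j * confDist X i j) + eta1sq w X := by
  have h : sigmaR w δ X
      = pairSum n (fun i j => w i j * δ i j ^ 2
          + ((-2) * (w i j * δ i j * confDist X i j) + w i j * confDist X i j ^ 2)) := by
    refine pairSum_congr' fun i j _ => by ring
  rw [h, pairSum_add', pairSum_add', pairSum_smul']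
  rw [etaDeltaSq, eta1sq]
  ring

lemma eta2sq_expand (w : Fin n → Fin n → ℝ) (hw1 : pairSum n w = 1)
    (X : Fin n → EuclideanSpace ℝ (Fin p)) :
    eta2sq w X = eta1sq w X - dbar w X ^ 2 := by
  have h : eta2sq w X
      = pairSum n (fun i j => w i j * confDist X i j ^ 2
          + ((-2 * dbar w X) * (w i j * confDist X i j) + (dbar w X ^ 2) * w i j)) := by
    refine pairSum_congr' fun i j _ => by ring
  rw [h, pairSum_add', pairSum_add', pairSum_smul', pairSum_smul', hw1]
  rw [eta1sq, dbar]
  ring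
end XiMain

/-- The quadratic function `ξ` majorizes `ω`, and touches it at `X = Y`. -/
theorem xi_majorizes_omega
    {n p : ℕ} (hn : 2 ≤ n) (hp : 1 ≤ p)
    (w δ : Fin n → Fin n → ℝ)
    (hw : ∀ i j : Fin n, i < j → 0 ≤ w i j)
    (hw1 : pairSum n w = 1)
    (hδ : ∀ i j : Fin n, i < j → 0 ≤ δ i j)
    (Y : Fin n → EuclideanSpace ℝ (Fin p))
    (hY2 : 0 < eta2sq w Y)
    (hYd : ∀ i j : Fin n, i < j → 0 < w i j → 0 < confDist Y i j) :
    (∀ X : Fin n → EuclideanSpace ℝ (Fin p), omegaFun w δ X Y ≤ xiFun w δ X Y) ∧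
      omegaFun w δ Y Y = xiFun w δ Y Y := by
  set S := sigma2 w δ Y with hSdef
  have hS : 0 ≤ S := by
    have h0 : 0 ≤ sigmaR w δ Y :=
      pairSum_nonneg' fun i j hij => mul_nonneg (hw i j hij) (sq_nonneg _)
    exact div_nonneg h0 hY2.le
  -- Cauchy-Schwarz: dbar X ^ 2 ≤ dbar Y * pairSum (w d(X)^2 / d(Y))
  have hCS : ∀ X : Fin n → EuclideanSpace ℝ (Fin p),
      dbar w X ^ 2 ≤ dbar w Y *
        pairSum n (fun i j => w i j * confDist X i j ^ 2 / confDist Y i j) := by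
    intro X
    set F : Fin n × Fin n → ℝ := fun q =>
      if q.1 < q.2 then Real.sqrt (w q.1 q.2 * confDist Y q.1 q.2) else 0 with hF
    set G : Fin n × Fin n → ℝ := fun q =>
      if q.1 < q.2 then Real.sqrt (w q.1 q.2) * confDist X q.1 q.2 / Real.sqrt (confDist Y q.1 q.2)
      else 0 with hG
    have key := Finset.sum_mul_sq_le_sq_mul_sq Finset.univ F G
    have h1 : ∑ q : Fin n × Fin n, F q * G q = dbar w X := by
      rw [dbar, pairSum_eq_prod']
      refine Finset.sum_congr rfl fun q _ => ?_
      by_cases hq : q.1 < q.2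
      · simp only [hF, hG, if_pos hq]
        rcases eq_or_lt_of_le (hw q.1 q.2 hq) with hw0 | hw0
        · rw [← hw0]; simp
        · have hdY : 0 < confDist Y q.1 q.2 := hYd q.1 q.2 hq hw0
          rw [Real.sqrt_mul (le_of_lt hw0)]
          have hww : Real.sqrt (w q.1 q.2) * Real.sqrt (w q.1 q.2) = w q.1 q.2 :=
            Real.mul_self_sqrt hw0.le
          field_simp
          linear_combination confDist X q.1 q.2 * hww
      · simp [hF, hG, hq]
    have h2 : ∑ q : Fin n × Fin n, F q ^ 2 = dbar w Y := by
      rw [dbar, pairSum_eq_prod']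
      refine Finset.sum_congr rfl fun q _ => ?_
      by_cases hq : q.1 < q.2
      · simp only [hF, if_pos hq]
        exact Real.sq_sqrt (mul_nonneg (hw q.1 q.2 hq) (norm_nonneg _))
      · simp [hF, hq]
    have h3 : ∑ q : Fin n × Fin n, G q ^ 2
        = pairSum n (fun i j => w i j * confDist X i j ^ 2 / confDist Y i j) := by
      rw [pairSum_eq_prod']
      refine Finset.sum_congr rfl fun q _ => ?_
      by_cases hq : q.1 < q.2
      · simp only [hG, if_pos hq]
        have hnn : (0:ℝ) ≤ confDist Y q.1 q.2 := norm_nonneg _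
        rw [div_pow, mul_pow, Real.sq_sqrt (hw q.1 q.2 hq), Real.sq_sqrt hnn]
      · simp [hG, hq]
    rw [h1, h2, h3] at key
    exact key
  -- termwise inner-product bound
  have hAB : ∀ X : Fin n → EuclideanSpace ℝ (Fin p),
      pairSum n (fun i j =>
        w i j * δ i j * (inner ℝ (X i - X j) (Y i - Y j) : ℝ) / confDist Y i j)
      ≤ pairSum n (fun i j => w i j * δ i j * confDist X i j) := by
    intro X
    refine pairSum_le' fun i j hij => ?_
    rcases eq_or_lt_of_le (hw i j hij) with hw0 | hw0
    · rw [← hw0]; simp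
    · have hdY : 0 < confDist Y i j := hYd i j hij hw0
      rw [div_le_iff₀ hdY]
      have hcs : (inner ℝ (X i - X j) (Y i - Y j) : ℝ) ≤ confDist X i j * confDist Y i j :=
        real_inner_le_norm _ _
      have hwd : 0 ≤ w i j * δ i j := mul_nonneg hw0.le (hδ i j hij)
      calc w i j * δ i j * (inner ℝ (X i - X j) (Y i - Y j) : ℝ)
          ≤ w i j * δ i j * (confDist X i j * confDist Y i j) :=
            mul_le_mul_of_nonneg_left hcs hwd
        _ = w i j * δ i j * confDist X i j * confDist Y i j := by ring
  constructor
  · intro X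
    have hω : omegaFun w δ X Y = etaDeltaSq n w δ + (1 - S) * eta1sq w X
        - 2 * pairSum n (fun i j => w i j * δ i j * confDist X i j)
        + S * dbar w X ^ 2 := by
      rw [omegaFun, sigmaR_expand, eta2sq_expand w hw1 X, ← hSdef]
      ring
    rw [hω, xiFun, ← hSdef]
    have h1 := hAB X
    have h2 : S * dbar w X ^ 2 ≤ S * (dbar w Y *
        pairSum n (fun i j => w i j * confDist X i j ^ 2 / confDist Y i j)) :=
      mul_le_mul_of_nonneg_left (hCS X) hS
    nlinarith [h1, h2]
  · have hB : pairSum n (fun i j =>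
        w i j * δ i j * (inner ℝ (Y i - Y j) (Y i - Y j) : ℝ) / confDist Y i j)
        = pairSum n (fun i j => w i j * δ i j * confDist Y i j) := by
      refine pairSum_congr' fun i j hij => ?_
      rcases eq_or_lt_of_le (hw i j hij) with hw0 | hw0
      · rw [← hw0]; simp
      · have hdY : 0 < confDist Y i j := hYd i j hij hw0
        rw [real_inner_self_eq_norm_sq]
        rw [show ‖Y i - Y j‖ = confDist Y i j from rfl]
        field_simp
    have hC : pairSum n (fun i j => w i j * confDist Y i j ^ 2 / confDist Y i j)
        = dbar w Y := by
      rw [dbar]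
      refine pairSum_congr' fun i j hij => ?_
      rcases eq_or_lt_of_le (hw i j hij) with hw0 | hw0
      · rw [← hw0]; simp
      · have hdY : 0 < confDist Y i j := hYd i j hij hw0
        field_simp
    rw [omegaFun, xiFun, ← hSdef, hB, hC, sigmaR_expand, eta2sq_expand w hw1 Y]
    ring
end

section
/- (Gradient of raw stress.) Let X be an n×p real matrix with d_ij(X) > 0 for every pair i < j with w_ij > 0. Then the raw stress function σ_R is Fréchet differentiable at X with derivative the linear map H ↦ 2·trace(Hᵀ (V − B(X)) X). -/
open scoped BigOperators
open Matrix

/-- Euclidean distance between rows `i` and `j` of an `n × p` matrix. -/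
noncomputable def rowDist {n p : ℕ} (X : Matrix (Fin n) (Fin p) ℝ) (i j : Fin n) : ℝ :=
  Real.sqrt (∑ k : Fin p, (X i k - X j k) ^ 2)

/-- The matrix `A_ij = (e_i - e_j)(e_i - e_j)ᵀ`. -/
noncomputable def Amat {n : ℕ} (i j : Fin n) : Matrix (Fin n) (Fin n) ℝ :=
  Matrix.vecMulVec (Pi.single i 1 - Pi.single j 1) (Pi.single i 1 - Pi.single j 1)

/-- The matrix `V = Σ_{i<j} w_ij A_ij`. -/
noncomputable def Vmat {n : ℕ} (w : Fin n → Fin n → ℝ) : Matrix (Fin n) (Fin n) ℝ :=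
  ∑ i : Fin n, ∑ j : Fin n, if i < j then w i j • Amat i j else 0

/-- Mean distance `d̄(X) = Σ_{i<j} w_ij d_ij(X)`. -/
noncomputable def dbarM {n p : ℕ} (w : Fin n → Fin n → ℝ)
    (X : Matrix (Fin n) (Fin p) ℝ) : ℝ :=
  ∑ i : Fin n, ∑ j : Fin n, if i < j then w i j * rowDist X i j else 0

/-- The matrix `M(X) = d̄(X) · Σ_{i<j, d_ij(X)>0} (w_ij/d_ij(X)) A_ij`. -/
noncomputable def Mmat {n p : ℕ} (w : Fin n → Fin n → ℝ)
    (X : Matrix (Fin n) (Fin p) ℝ) : Matrix (Fin n) (Fin n) ℝ :=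
  dbarM w X •
    ∑ i : Fin n, ∑ j : Fin n,
      if i < j ∧ 0 < rowDist X i j then (w i j / rowDist X i j) • Amat i j else 0

/-- The matrix `B(X) = Σ_{i<j, d_ij(X)>0} w_ij (δ_ij/d_ij(X)) A_ij`. -/
noncomputable def Bmat {n p : ℕ} (w δ : Fin n → Fin n → ℝ)
    (X : Matrix (Fin n) (Fin p) ℝ) : Matrix (Fin n) (Fin n) ℝ :=
  ∑ i : Fin n, ∑ j : Fin n,
    if i < j ∧ 0 < rowDist X i j then (w i j * (δ i j / rowDist X i j)) • Amat i j else 0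

/-- Raw stress as a function of the configuration matrix. -/
noncomputable def sigmaRM {n p : ℕ} (w δ : Fin n → Fin n → ℝ)
    (X : Matrix (Fin n) (Fin p) ℝ) : ℝ :=
  ∑ i : Fin n, ∑ j : Fin n, if i < j then w i j * (δ i j - rowDist X i j) ^ 2 else 0

attribute [local instance] Matrix.frobeniusNormedAddCommGroup Matrix.frobeniusNormedSpace

noncomputable def entryCLM {n p : ℕ} (i : Fin n) (k : Fin p) :
    Matrix (Fin n) (Fin p) ℝ →L[ℝ] ℝ :=
  LinearMap.toContinuousLinearMap
    { toFun := fun X => X i k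
      map_add' := fun _ _ => rfl
      map_smul' := fun _ _ => rfl }

noncomputable def Tij {n p : ℕ} (X : Matrix (Fin n) (Fin p) ℝ) (i j : Fin n) :
    Matrix (Fin n) (Fin p) ℝ →L[ℝ] ℝ :=
  ∑ k : Fin p, (X i k - X j k) • (entryCLM i k - entryCLM j k)

lemma Tij_apply {n p : ℕ} (X H : Matrix (Fin n) (Fin p) ℝ) (i j : Fin n) :
    Tij X i j H = ∑ k : Fin p, (X i k - X j k) * (H i k - H j k) := by
  simp [Tij, entryCLM]
  rfl

lemma traceA {n p : ℕ} (i j : Fin n) (hij : i ≠ j) (H X : Matrix (Fin n) (Fin p) ℝ) :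
    Matrix.trace (Hᵀ * Amat i j * X) = ∑ k : Fin p, (H i k - H j k) * (X i k - X j k) := by
  simp [Matrix.trace, Matrix.mul_apply, Amat, Matrix.vecMulVec_apply, Matrix.diag,
    Pi.single_apply, sub_mul, mul_sub, Finset.sum_sub_distrib, ite_mul, mul_ite,
    Finset.sum_ite_eq, Finset.sum_ite_eq', hij, hij.symm]

lemma hasFDerivAt_rowDist {n p : ℕ} (X : Matrix (Fin n) (Fin p) ℝ) (i j : Fin n)
    (hd : 0 < rowDist X i j) :
    HasFDerivAt (fun Y => rowDist Y i j) ((rowDist X i j)⁻¹ • Tij X i j) X := by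
  have hq : HasFDerivAt (fun Y : Matrix (Fin n) (Fin p) ℝ => ∑ k : Fin p, (Y i k - Y j k) ^ 2)
      ((2 : ℝ) • Tij X i j) X := by
    have h : ∀ k : Fin p, HasFDerivAt (fun Y : Matrix (Fin n) (Fin p) ℝ => (Y i k - Y j k) ^ 2)
        (((2 : ℝ) * (X i k - X j k)) • (entryCLM i k - entryCLM j k)) X := by
      intro k
      have h1 : HasFDerivAt (fun Y : Matrix (Fin n) (Fin p) ℝ => Y i k - Y j k)
          (entryCLM i k - entryCLM j k) X :=
        ((entryCLM i k).hasFDerivAt.sub (entryCLM j k).hasFDerivAt)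
      have h2 := h1.mul h1
      have : ((2 : ℝ) * (X i k - X j k)) • (entryCLM i k - entryCLM j k)
          = (X i k - X j k) • (entryCLM i k - entryCLM j k)
            + (X i k - X j k) • (entryCLM i k - entryCLM j k) := by
        rw [two_mul, add_smul]
      rw [this]
      simp only [pow_two]
      exact h2
    have := HasFDerivAt.fun_sum (fun k (_ : k ∈ Finset.univ) => h k)
    refine this.congr_fderiv ?_
    simp [Tij, Finset.smul_sum, smul_smul]
    rfl
  have hne : (∑ k : Fin p, (X i k - X j k) ^ 2) ≠ 0 := by
    intro h0
    rw [rowDist, h0, Real.sqrt_zero] at hd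
    exact lt_irrefl 0 hd
  have hs := (Real.hasDerivAt_sqrt hne).comp_hasFDerivAt X hq
  have e : 1 / (2 * Real.sqrt (∑ k : Fin p, (X i k - X j k) ^ 2)) * 2 = (rowDist X i j)⁻¹ := by
    have h0 : Real.sqrt (∑ k : Fin p, (X i k - X j k) ^ 2) ≠ 0 := ne_of_gt hd
    rw [show rowDist X i j = Real.sqrt (∑ k : Fin p, (X i k - X j k) ^ 2) from rfl]
    field_simp
  erw [smul_smul, e] at hs
  exact hs

lemma hasFDerivAt_pair {n p : ℕ} (w δ : Fin n → Fin n → ℝ) (X : Matrix (Fin n) (Fin p) ℝ)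
    (i j : Fin n) (hd : 0 < rowDist X i j) :
    HasFDerivAt (fun Y => w i j * (δ i j - rowDist Y i j) ^ 2)
      ((-2 * w i j * (δ i j - rowDist X i j) / rowDist X i j) • Tij X i j) X := by
  have h := (hasFDerivAt_rowDist X i j hd).const_sub (δ i j)
  have h2 := (h.mul h).const_mul (w i j)
  have heq : ((-2 * w i j * (δ i j - rowDist X i j) / rowDist X i j) • Tij X i j)
      = w i j • ((δ i j - rowDist X i j) • -((rowDist X i j)⁻¹ • Tij X i j)
          + (δ i j - rowDist X i j) • -((rowDist X i j)⁻¹ • Tij X i j)) := by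
    match_scalars
    field_simp
    ring
  rw [heq]
  simp only [pow_two]
  exact h2


/-- Gradient of raw stress: `σ_R` is Fréchet differentiable at `X` with derivative
`H ↦ 2·trace(Hᵀ (V − B(X)) X)`. -/
theorem hasFDerivAt_sigmaR
    {n p : ℕ} (hn : 2 ≤ n) (hp : 1 ≤ p)
    (w δ : Fin n → Fin n → ℝ)
    (hw : ∀ i j : Fin n, i < j → 0 ≤ w i j)
    (hw1 : (∑ i : Fin n, ∑ j : Fin n, if i < j then w i j else 0) = 1)
    (hδ : ∀ i j : Fin n, i < j → 0 ≤ δ i j)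
    (X : Matrix (Fin n) (Fin p) ℝ)
    (hd : ∀ i j : Fin n, i < j → 0 < w i j → 0 < rowDist X i j) :
    ∃ L : Matrix (Fin n) (Fin p) ℝ →L[ℝ] ℝ,
      (∀ H : Matrix (Fin n) (Fin p) ℝ,
        L H = 2 * Matrix.trace (Hᵀ * (Vmat w - Bmat w δ X) * X)) ∧
      HasFDerivAt (sigmaRM w δ) L X := by
  classical
  set c : Fin n → Fin n → ℝ :=
    fun i j => -2 * w i j * (δ i j - rowDist X i j) / rowDist X i j with hc
  set D : Matrix (Fin n) (Fin p) ℝ →L[ℝ] ℝ :=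
    ∑ i : Fin n, ∑ j : Fin n, if i < j then c i j • Tij X i j else 0 with hDdef
  have hD : HasFDerivAt (sigmaRM w δ) D X := by
    rw [hDdef]
    have : sigmaRM w δ = fun Y : Matrix (Fin n) (Fin p) ℝ =>
        ∑ i : Fin n, ∑ j : Fin n, if i < j then w i j * (δ i j - rowDist Y i j) ^ 2 else 0 :=
      rfl
    rw [this]
    refine HasFDerivAt.fun_sum fun i _ => HasFDerivAt.fun_sum fun j _ => ?_
    by_cases hij : i < j
    · simp only [if_pos hij]
      by_cases hw0 : w i j = 0
      · have : (fun Y : Matrix (Fin n) (Fin p) ℝ => w i j * (δ i j - rowDist Y i j) ^ 2)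
            = fun _ => (0 : ℝ) := by
          funext Y; rw [hw0, zero_mul]
        rw [this, show c i j • Tij X i j = 0 by rw [hc]; simp [hw0]]
        exact hasFDerivAt_const 0 X
      · have hwpos : 0 < w i j := lt_of_le_of_ne (hw i j hij) (Ne.symm hw0)
        exact hasFDerivAt_pair w δ X i j (hd i j hij hwpos)
    · simp only [if_neg hij]
      exact hasFDerivAt_const 0 X
  refine ⟨D, ?_, hD⟩
  intro H
  -- compute D H
  have hLHS : D H = ∑ i : Fin n, ∑ j : Fin n,
      (if i < j then c i j * ∑ k : Fin p, (X i k - X j k) * (H i k - H j k) else 0) := by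
    rw [hDdef]
    rw [ContinuousLinearMap.sum_apply]
    refine Finset.sum_congr rfl fun i _ => ?_
    rw [ContinuousLinearMap.sum_apply]
    refine Finset.sum_congr rfl fun j _ => ?_
    by_cases hij : i < j
    · simp [hij, Tij_apply]
    · simp [hij]
  rw [hLHS]
  -- compute RHS
  have hC : Vmat w - Bmat w δ X = ∑ i : Fin n, ∑ j : Fin n,
      ((if i < j then w i j • Amat i j else 0)
        - (if i < j ∧ 0 < rowDist X i j then (w i j * (δ i j / rowDist X i j)) • Amat i j
            else 0)) := by
    rw [Vmat, Bmat, ← Finset.sum_sub_distrib]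
    exact Finset.sum_congr rfl fun i _ => (Finset.sum_sub_distrib _ _).symm
  rw [hC]
  rw [Matrix.mul_sum, Matrix.sum_mul, Matrix.trace_sum, Finset.mul_sum]
  refine Finset.sum_congr rfl fun i _ => ?_
  rw [Matrix.mul_sum, Matrix.sum_mul, Matrix.trace_sum, Finset.mul_sum]
  refine Finset.sum_congr rfl fun j _ => ?_
  by_cases hij : i < j
  · have hne : i ≠ j := ne_of_lt hij
    by_cases hdij : 0 < rowDist X i j
    · have hd0 : rowDist X i j ≠ 0 := ne_of_gt hdij
      simp only [if_pos hij, if_pos (And.intro hij hdij), Matrix.sub_mul, Matrix.mul_sub,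
        Matrix.trace_sub, Matrix.smul_mul, Matrix.mul_smul, Matrix.trace_smul, smul_eq_mul,
        traceA i j hne H X]
      rw [show (∑ k : Fin p, (X i k - X j k) * (H i k - H j k))
          = ∑ k : Fin p, (H i k - H j k) * (X i k - X j k) from
        Finset.sum_congr rfl fun k _ => mul_comm _ _]
      rw [hc]
      field_simp
      ring
    · have hw0 : w i j = 0 :=
        le_antisymm (not_lt.mp fun hwp => hdij (hd i j hij hwp)) (hw i j hij)
      simp [hij, hdij, hw0, hc]
  · simp [hij]
end
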